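/- Let Δ = σ + 4m be a fundamental discriminant, Q₀(x,y) = x² + σxy − my² the principal form. Suppose A₁, A₂, β₁, β₂ are integers with A₁² | Q₀(β₁,1), A₂² | Q₀(β₂,1), gcd(A₁,Δ) = 1, gcd(A₂,Δ) = 1. Let β⁺ = β₁ + β₂ + σ, ê = gcd(A₁², A₂², β⁺) and e = gcd(A₁, A₂, β⁺). Then ê = e². -/

import Mathlib

/-- `Δ` is a fundamental discriminant of a quadratic field. -/
def IsFundamentalDiscriminant (Δ : ℤ) : Prop :=
  ∃ d : ℤ, Squarefree d ∧
    ((d % 4 = 1 ∧ Δ = d) ∨ ((d % 4 = 2 ∨ d % 4 = 3) ∧ Δ = 4 * d))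

theorem gcd_sq_eq (σ m Δ A₁ A₂ β₁ β₂ : ℤ) (hσ : σ = 0 ∨ σ = 1) (hΔ : Δ = σ + 4 * m)
    (hfund : IsFundamentalDiscriminant Δ)
    (h1 : A₁ ^ 2 ∣ β₁ ^ 2 + σ * β₁ - m) (h2 : A₂ ^ 2 ∣ β₂ ^ 2 + σ * β₂ - m)
    (hc1 : Int.gcd A₁ Δ = 1) (hc2 : Int.gcd A₂ Δ = 1) :
    gcd (gcd (A₁ ^ 2) (A₂ ^ 2)) (β₁ + β₂ + σ) =
      (gcd (gcd A₁ A₂) (β₁ + β₂ + σ)) ^ 2 := by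
  set β : ℤ := β₁ + β₂ + σ with hβdef
  set g : ℤ := gcd A₁ A₂ with hgdef
  set e : ℤ := gcd g β with hedef
  set E : ℤ := gcd (gcd (A₁ ^ 2) (A₂ ^ 2)) β with hEdef
  have heA₁ : e ∣ A₁ := (gcd_dvd_left g β).trans (gcd_dvd_left A₁ A₂)
  have heA₂ : e ∣ A₂ := (gcd_dvd_left g β).trans (gcd_dvd_right A₁ A₂)
  have heβ : e ∣ β := gcd_dvd_right g β
  have hQ1 : e ^ 2 ∣ β₁ ^ 2 + σ * β₁ - m := (pow_dvd_pow_of_dvd heA₁ 2).trans h1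
  have hQ2 : e ^ 2 ∣ β₂ ^ 2 + σ * β₂ - m := (pow_dvd_pow_of_dvd heA₂ 2).trans h2
  have hprod : e ^ 2 ∣ (β₁ - β₂) * β := by
    have h := dvd_sub hQ1 hQ2
    have heq : (β₁ ^ 2 + σ * β₁ - m) - (β₂ ^ 2 + σ * β₂ - m) = (β₁ - β₂) * β := by
      rw [hβdef]; ring
    rwa [heq] at h
  -- coprimality of e and β₁ - β₂
  have hcop : IsCoprime e (β₁ - β₂) := by
    rw [Int.isCoprime_iff_gcd_eq_one]
    set c : ℕ := Int.gcd e (β₁ - β₂) with hc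
    have hce : (c : ℤ) ∣ e := Int.gcd_dvd_left _ _
    have hcb : (c : ℤ) ∣ β₁ - β₂ := Int.gcd_dvd_right _ _
    have hcu : (c : ℤ) ∣ 2 * β₁ + σ := by
      have hid : β + (β₁ - β₂) = 2 * β₁ + σ := by rw [hβdef]; ring
      calc (c : ℤ) ∣ β + (β₁ - β₂) := dvd_add (hce.trans heβ) hcb
        _ = 2 * β₁ + σ := hid
    have hcQ : (c : ℤ) ∣ β₁ ^ 2 + σ * β₁ - m :=
      (hce.trans (dvd_pow_self e two_ne_zero)).trans hQ1
    have hcΔ : (c : ℤ) ∣ Δ := by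
      have hΔeq : Δ = (2 * β₁ + σ) * (2 * β₁ + σ) - 4 * (β₁ ^ 2 + σ * β₁ - m) := by
        rcases hσ with h | h <;> subst h <;> rw [hΔ] <;> ring
      rw [hΔeq]
      exact dvd_sub (hcu.mul_right _) (hcQ.mul_left _)
    have hfin : (c : ℤ) ∣ ((Int.gcd A₁ Δ : ℕ) : ℤ) := Int.dvd_coe_gcd (hce.trans heA₁) hcΔ
    rw [hc1] at hfin
    exact_mod_cast Int.eq_one_of_dvd_one (Int.natCast_nonneg c) (by exact_mod_cast hfin)
  have he2β : e ^ 2 ∣ β := (hcop.pow_left).dvd_of_dvd_mul_left hprod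
  have he2E : e ^ 2 ∣ E :=
    dvd_gcd (dvd_gcd (pow_dvd_pow_of_dvd heA₁ 2) (pow_dvd_pow_of_dvd heA₂ 2)) he2β
  -- now E ∣ e ^ 2
  have hE1 : E ∣ A₁ ^ 2 := (gcd_dvd_left _ _).trans (gcd_dvd_left _ _)
  have hE2 : E ∣ A₂ ^ 2 := (gcd_dvd_left _ _).trans (gcd_dvd_right _ _)
  have hEβ : E ∣ β := gcd_dvd_right _ _
  have hEm : E ∣ A₁ * A₂ := by
    have h : E ^ 2 ∣ (A₁ * A₂) ^ 2 := by
      have := mul_dvd_mul hE1 hE2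
      rw [← pow_two, ← mul_pow] at this
      exact this
    exact (Int.pow_dvd_pow_iff two_ne_zero).mp h
  have hEg2 : E ∣ g ^ 2 := by
    have hbz : g = A₁ * Int.gcdA A₁ A₂ + A₂ * Int.gcdB A₁ A₂ := by
      rw [hgdef, ← Int.coe_gcd, Int.gcd_eq_gcd_ab]
    have hsq : g ^ 2 = A₁ ^ 2 * Int.gcdA A₁ A₂ ^ 2
        + (A₁ * A₂) * (2 * Int.gcdA A₁ A₂ * Int.gcdB A₁ A₂)
        + A₂ ^ 2 * Int.gcdB A₁ A₂ ^ 2 := by rw [hbz]; ring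
    rw [hsq]
    exact dvd_add (dvd_add (hE1.mul_right _) (hEm.mul_right _)) (hE2.mul_right _)
  have hEe2 : E ∣ e ^ 2 := by
    have hbz : e = g * Int.gcdA g β + β * Int.gcdB g β := by
      rw [hedef, ← Int.coe_gcd, Int.gcd_eq_gcd_ab]
    have hsq : e ^ 2 = g ^ 2 * Int.gcdA g β ^ 2
        + β * (2 * g * Int.gcdA g β * Int.gcdB g β + β * Int.gcdB g β ^ 2) := by
      rw [hbz]; ring
    rw [hsq]
    exact dvd_add (hEg2.mul_right _) (hEβ.mul_right _)
  have hEnn : 0 ≤ E := by rw [hEdef, ← Int.coe_gcd]; exact Int.natCast_nonneg _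
  have henn : 0 ≤ e ^ 2 := sq_nonneg e
  exact Int.dvd_antisymm hEnn henn hEe2 he2E
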